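/- arXiv:2010.09819 — 2 statements merged into one kernel-verified Lean document; each statement's English description precedes it below -/
import Mathlib

section
/- If h : ℝⁿ → ℝ is continuously differentiable, x : ℝ≥0 → ℝⁿ is a differentiable solution curve satisfying (d/dt) h(x(t)) ≥ -α·h(x(t)) for all t ≥ 0 with α > 0, and h(x(0)) ≥ 0, then h(x(t)) ≥ 0 for all t ≥ 0 (forward invariance of the safe set). -/
/-- Forward invariance of the safe set `{x | h x ≥ 0}` under the barrier
differential inequality `(d/dt) h(x(t)) ≥ -α h(x(t))`. -/
theorem stmt_0 {n : ℕ} (h : EuclideanSpace ℝ (Fin n) → ℝ) (hh : ContDiff ℝ 1 h)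
    (x : ℝ → EuclideanSpace ℝ (Fin n)) (hx : Differentiable ℝ x)
    (α : ℝ) (hα : 0 < α)
    (hineq : ∀ t ≥ (0:ℝ), deriv (fun s => h (x s)) t ≥ -α * h (x t))
    (h0 : h (x 0) ≥ 0) :
    ∀ t ≥ (0:ℝ), h (x t) ≥ 0 := by
  intro t ht
  have hgdiff : Differentiable ℝ (fun s => h (x s)) :=
    (hh.differentiable one_ne_zero).comp hx
  set g : ℝ → ℝ := fun s => h (x s) with hg
  set f : ℝ → ℝ := fun s => Real.exp (α * s) * g s with hfdef
  have hfd : ∀ s : ℝ, HasDerivAt f (Real.exp (α * s) * α * g s + Real.exp (α * s) * deriv g s) s := by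
    intro s
    have h1 : HasDerivAt (fun s : ℝ => Real.exp (α * s)) (Real.exp (α * s) * α) s :=
      by simpa using ((hasDerivAt_id s).const_mul α).exp
    exact h1.mul (hgdiff s).hasDerivAt
  have key : ∀ s ∈ Set.Ici (0:ℝ), 0 ≤ deriv f s := by
    intro s hs
    rw [(hfd s).deriv]
    have hineq' := hineq s hs
    have hexp := Real.exp_pos (α * s)
    nlinarith
  have mono : MonotoneOn f (Set.Ici 0) :=
    monotoneOn_of_deriv_nonneg (convex_Ici 0)
      (fun s _ => (hfd s).continuousAt.continuousWithinAt)
      (fun s _ => (hfd s).differentiableAt.differentiableWithinAt)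
      (fun s hs => key s (interior_subset hs))
  have := mono (Set.self_mem_Ici) ht ht
  simp only [hfdef, mul_zero, Real.exp_zero, one_mul] at this
  have hexp := Real.exp_pos (α * t)
  nlinarith
end

section
/- Suppose U_rep is C¹ on the open set D = {‖x - x_obst‖ > D_obst} and U_rep(x) → ∞ as ‖x - x_obst‖ → D_obst⁺. If x : [0,T) → D is a solution of ẋ = -∇U_att(x) - ∇U_rep(x) with initial potential U(x(0)) = C < ∞ and U_att ≥ 0, then U_rep(x(t)) ≤ C for all t, and therefore the trajectory stays a positive distance away from the obstacle boundary: there exists ε > 0 with ‖x(t) - x_obst‖ ≥ D_obst + ε for all t ∈ [0,T). -/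
/-- Safety of the APF gradient flow: along `ẋ = -∇U_att(x) - ∇U_rep(x)` starting with
total potential `C`, the repulsive potential stays bounded by `C`, and the trajectory
stays a positive distance from the obstacle boundary. -/
theorem stmt_13 {n : ℕ} (Uatt Urep : EuclideanSpace ℝ (Fin n) → ℝ)
    (xobst : EuclideanSpace ℝ (Fin n)) (Dobst : ℝ) (hD : 0 < Dobst)
    (hattC1 : ContDiff ℝ 1 Uatt) (hattnn : ∀ x, 0 ≤ Uatt x)
    (hrepC1 : ContDiffOn ℝ 1 Urep {x | Dobst < ‖x - xobst‖})
    (hrepnn : ∀ x, Dobst < ‖x - xobst‖ → 0 ≤ Urep x)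
    (hblow : ∀ M : ℝ, ∃ ε > (0:ℝ), ∀ x, Dobst < ‖x - xobst‖ →
      ‖x - xobst‖ < Dobst + ε → Urep x > M)
    (T : ℝ) (x : ℝ → EuclideanSpace ℝ (Fin n))
    (hdom : ∀ t ∈ Set.Ico (0:ℝ) T, Dobst < ‖x t - xobst‖)
    (hode : ∀ t ∈ Set.Ico (0:ℝ) T,
      HasDerivAt x (-(gradient Uatt (x t)) - gradient Urep (x t)) t)
    (C : ℝ) (hC : Uatt (x 0) + Urep (x 0) = C) :
    (∀ t ∈ Set.Ico (0:ℝ) T, Urep (x t) ≤ C) ∧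
    ∃ ε > (0:ℝ), ∀ t ∈ Set.Ico (0:ℝ) T, Dobst + ε ≤ ‖x t - xobst‖ := by
  have hopen : IsOpen {y : EuclideanSpace ℝ (Fin n) | Dobst < ‖y - xobst‖} :=
    isOpen_lt continuous_const (by fun_prop)
  set g : ℝ → ℝ := fun t => Uatt (x t) + Urep (x t) with hg
  have key : ∀ t ∈ Set.Ico (0:ℝ) T,
      HasDerivAt g (-(‖gradient Uatt (x t) + gradient Urep (x t)‖^2)) t := by
    intro t ht
    set ga := gradient Uatt (x t)
    set gr := gradient Urep (x t)
    have hga : HasGradientAt Uatt ga (x t) :=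
      (hattC1.differentiable one_ne_zero (x t)).hasGradientAt
    have hgr : HasGradientAt Urep gr (x t) :=
      (((hrepC1.differentiableOn one_ne_zero).differentiableAt
        (hopen.mem_nhds (hdom t ht)))).hasGradientAt
    have h1 := hga.hasFDerivAt.comp_hasDerivAt t (hode t ht)
    have h2 := hgr.hasFDerivAt.comp_hasDerivAt t (hode t ht)
    have h3 := h1.add h2
    convert h3 using 1
    show -‖ga + gr‖ ^ 2 = inner ℝ ga (-ga - gr) + inner ℝ gr (-ga - gr)
    have : (-ga - gr) = -(ga + gr) := by abel
    rw [this, inner_neg_right, inner_neg_right, ← neg_add, ← inner_add_left,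
      real_inner_self_eq_norm_sq]
    all_goals rfl
  have hanti : AntitoneOn g (Set.Ico 0 T) := by
    apply antitoneOn_of_deriv_nonpos (convex_Ico 0 T)
    · intro t ht
      exact ((key t ht).continuousAt).continuousWithinAt
    · intro t ht
      rw [interior_Ico] at ht
      exact ((key t (Set.Ioo_subset_Ico_self ht)).differentiableAt).differentiableWithinAt
    · intro t ht
      rw [interior_Ico] at ht
      have := (key t (Set.Ioo_subset_Ico_self ht)).deriv
      rw [this]
      simp [neg_nonpos]
  have hbound : ∀ t ∈ Set.Ico (0:ℝ) T, Urep (x t) ≤ C := by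
    intro t ht
    have h0 : (0:ℝ) ∈ Set.Ico (0:ℝ) T := ⟨le_refl 0, lt_of_le_of_lt ht.1 ht.2⟩
    have := hanti h0 ht ht.1
    have h4 : Urep (x t) ≤ g t := by
      simp only [hg]
      linarith [hattnn (x t)]
    calc Urep (x t) ≤ g t := h4
      _ ≤ g 0 := this
      _ = C := hC
  refine ⟨hbound, ?_⟩
  obtain ⟨ε, hε, hεb⟩ := hblow C
  refine ⟨ε, hε, fun t ht => ?_⟩
  by_contra h
  exact absurd (hbound t ht) (not_le.mpr (hεb _ (hdom t ht) (not_le.mp h)))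
end
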